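/- arXiv:1405.3090 — 5 statements merged into one kernel-verified Lean document; each statement's English description precedes it below -/
import Mathlib

section
/- Let Ψ be a class of weights (over Set). The following are equivalent: (1) Ψ is sound; (2) for every small category E, a weight φ : Eᵒᵖ ⥤ Set is Ψ-flat whenever, for every weight ψ' : Eᵒᵖ ⥤ Set of the form ψ' = Lan_{Tᵒᵖ} ψ (the left Kan extension along Tᵒᵖ of some ψ : Dᵒᵖ ⥤ Set belonging to Ψ, for some functor T : D ⥤ E), the canonical map can : Colim_φ(e ↦ Nat(ψ', E(−, e))) → Nat(ψ', φ) — sending the class represented by (e, x ∈ φ(e), τ : ψ' ⟶ E(−, e)) to x̂ ∘ τ, where x̂ : E(−, e) ⟶ φ corresponds to x under the Yoneda lemma — is a bijection. -/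
open CategoryTheory CategoryTheory.Limits Opposite

namespace Paper

/-- The category of elements `el(φ)` of a weight `φ : Eᵒᵖ ⥤ Type`:
objects are pairs `(e, x)` with `x ∈ φ(e)`, a morphism `(e,x) → (e',x')` is
`t : e ⟶ e'` with `φ(t)(x') = x`. -/
abbrev elCat {E : Type} [SmallCategory E] (φ : Eᵒᵖ ⥤ Type) : Type :=
  (Functor.Elements φ)ᵒᵖ

/-- The projection `p : el(φ) ⥤ E`. -/
def elProj {E : Type} [SmallCategory E] (φ : Eᵒᵖ ⥤ Type) : elCat φ ⥤ E :=
  (CategoryOfElements.π φ).leftOp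

/-- The object `(e, x)` of `el(φ)`. -/
def elObj {E : Type} [SmallCategory E] (φ : Eᵒᵖ ⥤ Type) (e : E) (x : φ.obj (op e)) :
    elCat φ :=
  op ⟨op e, x⟩

/-- The `φ`-weighted colimit functor `Colim_φ : (E ⥤ Set) ⥤ Set`,
sending `F` to the colimit of `p ⋙ F` where `p : el(φ) ⥤ E`. -/
noncomputable def wColim {E : Type} [SmallCategory E] (φ : Eᵒᵖ ⥤ Type) :
    (E ⥤ Type) ⥤ Type :=
  (Functor.whiskeringLeft (elCat φ) E Type).obj (elProj φ) ⋙ colim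

/-- The `ψ`-weighted limit of a diagram `G : Dᵒᵖ ⥤ (E ⥤ Set)`, computed pointwise:
`(Lim_ψ G)(e) = Nat(ψ, G(−)(e))`. -/
def wLim {D E : Type} [SmallCategory D] [SmallCategory E]
    (ψ : Dᵒᵖ ⥤ Type) (G : Dᵒᵖ ⥤ E ⥤ Type) : E ⥤ Type :=
  G.flip ⋙ coyoneda.obj (op ψ)

/-- Evaluation of the weighted limit at `y ∈ ψ(d)`. -/
def wLimEval {D E : Type} [SmallCategory D] [SmallCategory E]
    (ψ : Dᵒᵖ ⥤ Type) (G : Dᵒᵖ ⥤ E ⥤ Type) (d : Dᵒᵖ) (y : ψ.obj d) :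
    wLim ψ G ⟶ G.obj d where
  app e := TypeCat.ofHom fun α => α.app d y
  naturality e e' f := rfl

/-- The canonical comparison `H(Lim_ψ G) → Nat(ψ, H ∘ G)` for a functor
`H : (E ⥤ Set) ⥤ Set`.  `H` preserves the `ψ`-weighted limit of `G` precisely
when this map is a bijection. -/
def wLimComparison {D E : Type} [SmallCategory D] [SmallCategory E]
    (H : (E ⥤ Type) ⥤ Type) (ψ : Dᵒᵖ ⥤ Type) (G : Dᵒᵖ ⥤ E ⥤ Type) :
    H.obj (wLim ψ G) → (ψ ⟶ G ⋙ H) := fun z =>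
  { app := fun d => TypeCat.ofHom fun y => H.map (wLimEval ψ G d y) z
    naturality := fun d d' g => by
      ext y
      have h : wLimEval ψ G d' (ψ.map g y) = wLimEval ψ G d y ≫ G.map g := by
        ext e α
        exact ConcreteCategory.congr_hom (α.naturality g) y
      change H.map (wLimEval ψ G d' (ψ.map g y)) z = H.map (G.map g) (H.map (wLimEval ψ G d y) z)
      rw [h, H.map_comp]
      rfl }

/-- A bundled weight: a small category `D` together with a functor `Dᵒᵖ ⥤ Set`. -/
structure Weight : Type 1 where
  D : Type
  [instD : SmallCategory D]
  w : D ᵒᵖ ⥤ Type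

attribute [instance] Weight.instD

/-- A class of weights. -/
abbrev WeightClass : Type 1 := Weight → Prop

/-- A weight `φ : Eᵒᵖ ⥤ Set` is `Ψ`-flat if `Colim_φ` preserves the `ψ`-weighted
limit of every diagram `G : Dᵒᵖ ⥤ (E ⥤ Set)`, for every `ψ` in `Ψ`. -/
def IsFlat (Ψ : WeightClass) {E : Type} [SmallCategory E] (φ : Eᵒᵖ ⥤ Type) : Prop :=
  ∀ W : Weight, Ψ W → ∀ G : W.Dᵒᵖ ⥤ E ⥤ Type,
    Function.Bijective (wLimComparison (wColim φ) W.w G)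

/-- `Ψ` is sound if every weight `φ` is `Ψ`-flat as soon as `Colim_φ` preserves
the `ψ`-weighted limits of all representable-valued diagrams `d ↦ E(T d, −)`. -/
def IsSound (Ψ : WeightClass) : Prop :=
  ∀ (E : Type) [SmallCategory E] (φ : Eᵒᵖ ⥤ Type),
    (∀ W : Weight, Ψ W → ∀ T : W.D ⥤ E,
      Function.Bijective (wLimComparison (wColim φ) W.w (T.op ⋙ coyoneda))) →
    IsFlat Ψ φ



/-- The cocone defining the canonical map
`Colim_φ (e ↦ Nat(ψ', E(−,e))) → Nat(ψ', φ)`. -/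
def canCocone {E : Type} [SmallCategory E] (φ ψ' : Eᵒᵖ ⥤ Type) :
    Cocone (elProj φ ⋙ (yoneda ⋙ coyoneda.obj (op ψ'))) where
  pt := ψ' ⟶ φ
  ι :=
    { app := fun j => TypeCat.ofHom fun τ => τ ≫ yonedaEquiv.symm j.unop.2
      naturality := fun j j' f => by
        ext τ
        change (τ ≫ yoneda.map f.unop.val.unop) ≫ yonedaEquiv.symm j'.unop.2 = τ ≫ yonedaEquiv.symm j.unop.2
        rw [Category.assoc]
        congr 1
        have := yonedaEquiv_symm_map f.unop.val j'.unop.2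
        rw [f.unop.property] at this
        exact this.symm }

/-- The canonical map `can : Colim_φ (e ↦ Nat(ψ', E(−,e))) → Nat(ψ', φ)`,
sending the class of `(e, x ∈ φ(e), τ : ψ' ⟶ E(−,e))` to `x̂ ∘ τ`, where
`x̂ : E(−,e) ⟶ φ` corresponds to `x` under the Yoneda lemma. -/
noncomputable def canMap {E : Type} [SmallCategory E] (φ ψ' : Eᵒᵖ ⥤ Type) :
    (wColim φ).obj (yoneda ⋙ coyoneda.obj (op ψ')) → (ψ' ⟶ φ) :=
  ⇑(colimit.desc (elProj φ ⋙ (yoneda ⋙ coyoneda.obj (op ψ'))) (canCocone φ ψ'))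

section Aux

variable {E : Type} [SmallCategory E] (φ : Eᵒᵖ ⥤ Type)

/-- The tautological cocone exhibiting `φ(e')` as `Colim_φ (E(e', −))`. -/
def tautCocone (e' : Eᵒᵖ) : Cocone (elProj φ ⋙ coyoneda.obj e') where
  pt := φ.obj e'
  ι :=
    { app := fun j => TypeCat.ofHom fun f => φ.map f.op j.unop.2
      naturality := fun j j' t => by
        ext f
        change φ.map (t.unop.val ≫ f.op) j'.unop.snd = φ.map f.op j.unop.snd
        exact (FunctorToTypes.map_comp_apply φ _ _ _).trans (congrArg (φ.map f.op) t.unop.2) }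

/-- The canonical natural transformation `coyoneda ⋙ Colim_φ ⟶ φ`. -/
noncomputable def tautDesc : coyoneda ⋙ wColim φ ⟶ φ where
  app e' := colimit.desc _ (tautCocone φ e')
  naturality e' e'' g := by
    dsimp [wColim]
    apply colimit.hom_ext
    intro j
    erw [ι_colimMap_assoc, colimit.ι_desc, colimit.ι_desc_assoc]
    ext f
    change φ.map (f.op ≫ g) j.unop.snd = φ.map g (φ.map f.op j.unop.snd)
    exact FunctorToTypes.map_comp_apply φ _ _ _

lemma tautDesc_app_bijective (e' : Eᵒᵖ) :
    Function.Bijective ((tautDesc φ).app e') := by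
  rw [Function.bijective_iff_has_inverse]
  refine ⟨fun y => colimit.ι (elProj φ ⋙ coyoneda.obj e') (elObj φ e'.unop y) (𝟙 e'.unop),
    ?_, ?_⟩
  · intro z
    obtain ⟨j, f, rfl⟩ := Types.jointly_surjective' (F := elProj φ ⋙ coyoneda.obj e') z
    have h1 : (tautDesc φ).app e' (colimit.ι (elProj φ ⋙ coyoneda.obj e') j f) =
        φ.map f.op j.unop.2 :=
      ConcreteCategory.congr_hom (colimit.ι_desc (tautCocone φ e') j) f
    rw [h1]
    let m : elObj φ e'.unop (φ.map f.op j.unop.2) ⟶ j :=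
      Quiver.Hom.op (X := j.unop) ⟨f.op, rfl⟩
    have h2 := ConcreteCategory.congr_hom (colimit.w (elProj φ ⋙ coyoneda.obj e') m) (𝟙 e'.unop)
    have h2' : (elProj φ ⋙ coyoneda.obj e').map m (𝟙 e'.unop) = f := Category.id_comp f
    exact h2.symm.trans ((ConcreteCategory.comp_apply _ _ _).trans (congrArg _ h2'))
  · intro y
    have h1 : (tautDesc φ).app e'
        (colimit.ι (elProj φ ⋙ coyoneda.obj e') (elObj φ e'.unop y) (𝟙 e'.unop)) =
        φ.map (𝟙 e').unop.op y :=
      ConcreteCategory.congr_hom (colimit.ι_desc (tautCocone φ e') (elObj φ e'.unop y)) (𝟙 e'.unop)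
    rw [h1]
    simp

instance : IsIso (tautDesc φ) := by
  have : ∀ e', IsIso ((tautDesc φ).app e') :=
    fun e' => (isIso_iff_bijective _).2 (tautDesc_app_bijective φ e')
  exact NatIso.isIso_of_isIso_app _

variable {D : Type} [SmallCategory D] (ψ : Dᵒᵖ ⥤ Type) (T : D ⥤ E)
variable (ψ' : Eᵒᵖ ⥤ Type) (α : ψ ⟶ T.op ⋙ ψ') [ψ'.IsLeftKanExtension α]

/-- The natural isomorphism `Nat(ψ', E(−, e)) ≅ Nat(ψ, E(T −, e))` coming from the
Kan extension property. -/
noncomputable def nuIso :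
    (yoneda ⋙ coyoneda.obj (op ψ')) ≅ wLim ψ (T.op ⋙ coyoneda) :=
  NatIso.ofComponents
    (fun e => Equiv.toIso (ψ'.homEquivOfIsLeftKanExtension α (yoneda.obj e)))
    (fun f => by
      ext σ
      apply NatTrans.ext
      funext d
      rfl)

/-- The equivalence `Nat(ψ, Colim_φ (E(T−, −))) ≃ Nat(ψ', φ)`. -/
noncomputable def Requiv :
    (ψ ⟶ (T.op ⋙ coyoneda) ⋙ wColim φ) ≃ (ψ' ⟶ φ) :=
  ((Iso.refl ψ).homCongr (asIso (Functor.whiskerLeft T.op (tautDesc φ)))).trans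
    (ψ'.homEquivOfIsLeftKanExtension α φ).symm

lemma key_square (z : (wColim φ).obj (yoneda ⋙ coyoneda.obj (op ψ'))) :
    canMap φ ψ' z =
      Requiv φ ψ T ψ' α
        (wLimComparison (wColim φ) ψ (T.op ⋙ coyoneda)
          ((wColim φ).map (nuIso ψ T ψ' α).hom z)) := by
  obtain ⟨j, τ, rfl⟩ := Types.jointly_surjective' (F := elProj φ ⋙ (yoneda ⋙ coyoneda.obj (op ψ'))) z
  have h1 : canMap φ ψ'
      (colimit.ι (elProj φ ⋙ (yoneda ⋙ coyoneda.obj (op ψ'))) j τ) =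
      τ ≫ yonedaEquiv.symm j.unop.2 :=
    ConcreteCategory.congr_hom (colimit.ι_desc (canCocone φ ψ') j) τ
  have h2 : (wColim φ).map (nuIso ψ T ψ' α).hom
      (colimit.ι (elProj φ ⋙ (yoneda ⋙ coyoneda.obj (op ψ'))) j τ) =
      colimit.ι (elProj φ ⋙ wLim ψ (T.op ⋙ coyoneda)) j
        ((nuIso ψ T ψ' α).hom.app ((elProj φ).obj j) τ) :=
    ConcreteCategory.congr_hom (ι_colimMap (Functor.whiskerLeft (elProj φ) (nuIso ψ T ψ' α).hom) j) τ
  rw [h1, h2]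
  apply (ψ'.homEquivOfIsLeftKanExtension α φ).injective
  dsimp only [Requiv, Equiv.trans_apply]
  rw [Equiv.apply_symm_apply]
  simp only [Iso.homCongr, Equiv.coe_fn_mk, Iso.refl_inv, Category.id_comp, asIso_hom]
  apply NatTrans.ext
  ext d y
  have h3 := ConcreteCategory.congr_hom (ι_colimMap (Functor.whiskerLeft (elProj φ)
      (wLimEval ψ (T.op ⋙ coyoneda) d y)) j) ((nuIso ψ T ψ' α).hom.app ((elProj φ).obj j) τ)
  dsimp at h3
  simp only [NatTrans.comp_app, Functor.whiskerLeft_app, wLimComparison, wColim, Functor.comp_map,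
    Functor.whiskeringLeft_obj_map, colim_map, types_comp_apply]
  refine Eq.trans ?_ (congrArg (ConcreteCategory.hom ((Functor.whiskerLeft T.op (tautDesc φ)).app d)) h3).symm
  dsimp only [tautDesc]
  refine Eq.trans ?_ (colimit.ι_desc_apply (tautCocone φ _) j _).symm
  dsimp [tautCocone, nuIso, wLimEval, Functor.homEquivOfIsLeftKanExtension]
  rfl

lemma canMap_bijective_iff (α : ψ ⟶ T.op ⋙ ψ') [ψ'.IsLeftKanExtension α] :
    Function.Bijective (canMap φ ψ') ↔
      Function.Bijective (wLimComparison (wColim φ) ψ (T.op ⋙ coyoneda)) := by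
  have hL : Function.Bijective ((wColim φ).map (nuIso ψ T ψ' α).hom) :=
    (isIso_iff_bijective _).1 inferInstance
  have hfun : canMap φ ψ' = (Requiv φ ψ T ψ' α) ∘
      (wLimComparison (wColim φ) ψ (T.op ⋙ coyoneda)) ∘
        ((wColim φ).map (nuIso ψ T ψ' α).hom) :=
    funext (key_square φ ψ T ψ' α)
  rw [hfun, ← Function.comp_assoc,
    Function.Bijective.of_comp_iff _ hL,
    Function.Bijective.of_comp_iff' (Requiv φ ψ T ψ' α).bijective]

end Aux

/-- `Ψ` is sound iff flatness of a weight `φ : Eᵒᵖ ⥤ Set` follows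
from bijectivity of the canonical maps `can : Colim_φ(e ↦ Nat(ψ', E(−,e))) → Nat(ψ', φ)`
for all weights `ψ'` on `E` of the form `Lan_{Tᵒᵖ} ψ` with `ψ` in `Ψ`. -/
theorem soundness_iff_canonical_coend_criterion (Ψ : WeightClass) :
    IsSound Ψ ↔
      ∀ (E : Type) [SmallCategory E] (φ : Eᵒᵖ ⥤ Type),
        (∀ ψ' : Eᵒᵖ ⥤ Type,
          (∃ (D : Type) (_ : SmallCategory D) (ψ : Dᵒᵖ ⥤ Type) (T : D ⥤ E)
              (α : ψ ⟶ T.op ⋙ ψ'),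
            Ψ (Weight.mk D ψ) ∧ ψ'.IsLeftKanExtension α) →
          Function.Bijective (canMap φ ψ')) →
        IsFlat Ψ φ := by
  constructor
  · intro hS E _ φ hB
    apply hS
    intro W hW T
    have hc := hB (T.op.pointwiseLeftKanExtension W.w)
      ⟨W.D, W.instD, W.w, T, T.op.pointwiseLeftKanExtensionUnit W.w, hW, inferInstance⟩
    exact (canMap_bijective_iff φ W.w T _ (T.op.pointwiseLeftKanExtensionUnit W.w)).1 hc
  · intro hC E _ φ hA
    apply hC
    rintro ψ' ⟨D, iD, ψ, T, α, hW, hKan⟩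
    exact (canMap_bijective_iff φ ψ T ψ' α).2 (hA ⟨D, ψ⟩ hW T)

end Paper
end

section
/- Let 𝔻 be a class of small categories. The following are equivalent: (1) 𝔻 is sound; (2) every small category E is 𝔻-filtered provided that, for every small category D with Dᵒᵖ in 𝔻 and every functor T : D ⥤ E, the category of cocones on T is nonempty and connected. -/
open CategoryTheory CategoryTheory.Limits Opposite

namespace Paper

/-- A bundled small category. -/
structure SmallCat : Type 1 where
  C : Type
  [instC : SmallCategory C]

attribute [instance] SmallCat.instC

/-- A class of small categories. -/
abbrev CatClass : Type 1 := SmallCat → Prop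

/-- A weight `φ : Eᵒᵖ ⥤ Set` is `𝔻`-flat if `Colim_φ` preserves all (conical)
limits of shape `C`, for every `C` in `𝔻`. -/
def DFlat (𝔻 : CatClass) {E : Type} [SmallCategory E] (φ : Eᵒᵖ ⥤ Type) : Prop :=
  ∀ C : SmallCat, 𝔻 C → PreservesLimitsOfShape C.C (wColim φ)

/-- A small category `E` is `𝔻`-filtered if `colim : (E ⥤ Set) ⥤ Set` preserves
all limits of shape `C`, for every `C` in `𝔻`. -/
def DFiltered (𝔻 : CatClass) (E : Type) [SmallCategory E] : Prop :=
  ∀ C : SmallCat, 𝔻 C → PreservesLimitsOfShape C.C (colim : (E ⥤ Type) ⥤ Type)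

/-- The class `𝔻` is sound if every weight `φ : Eᵒᵖ ⥤ Set` is `𝔻`-flat as soon as
`Colim_φ` preserves, for every `C` in `𝔻`, all limits of shape `C` of diagrams
whose values are representable functors `E(e, −)`. -/
def DSound (𝔻 : CatClass) : Prop :=
  ∀ (E : Type) [SmallCategory E] (φ : Eᵒᵖ ⥤ Type),
    (∀ C : SmallCat, 𝔻 C → ∀ K : C.C ⥤ E ⥤ Type,
      (∀ c : C.C, ∃ e : E, Nonempty (K.obj c ≅ coyoneda.obj (op e))) →
      PreservesLimit K (wColim φ)) →
    DFlat 𝔻 φ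

/-! ### Auxiliary constructions -/

theorem zag_of_hom {J : Type*} [Category J] {a b : J} (m : a ⟶ b) : Zigzag a b :=
  Relation.ReflTransGen.single (Or.inl ⟨m⟩)

section Aux

variable {E : Type} [SmallCategory E] {C : Type} [SmallCategory C]

/-- The functor sending `e` to the set of cocones on `T'` with vertex `e`. -/
def coconeFun (T' : Cᵒᵖ ⥤ E) : E ⥤ Type where
  obj e := { f : ∀ c : Cᵒᵖ, T'.obj c ⟶ e // ∀ {c c' : Cᵒᵖ} (u : c ⟶ c'), T'.map u ≫ f c' = f c }
  map g := TypeCat.ofHom fun f => ⟨fun c => f.1 c ≫ g, fun {c c'} u => by rw [← Category.assoc, f.2 u]⟩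
  map_id e := by ext f c; exact Category.comp_id _
  map_comp g h := by ext f c; exact (Category.assoc _ _ _).symm

/-- The diagram of representables associated with `T' : Cᵒᵖ ⥤ E`. -/
def repDiag (T' : Cᵒᵖ ⥤ E) : C ⥤ E ⥤ Type where
  obj c := coyoneda.obj (op (T'.obj (op c)))
  map u := coyoneda.map ((T'.map u.op).op)
  map_id c := by simp
  map_comp u v := by simp

/-- The canonical limit cone on `repDiag T'`, with apex `coconeFun T'`. -/
def coconeCone (T' : Cᵒᵖ ⥤ E) : Cone (repDiag (C := C) T') where
  pt := coconeFun T'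
  π :=
    { app := fun c =>
        { app := fun e => TypeCat.ofHom fun f => f.1 (op c)
          naturality := fun e e' g => rfl }
      naturality := fun c c' u => by
        ext e f
        exact (f.2 u.op).symm }

/-- The cone `coconeCone T'` is a limit cone. -/
def coconeConeIsLimit (T' : Cᵒᵖ ⥤ E) : IsLimit (coconeCone (C := C) T') where
  lift s :=
    { app := fun e => TypeCat.ofHom fun a =>
        ⟨fun c => (s.π.app c.unop).app e a, fun {c c'} u => by
          exact ConcreteCategory.congr_hom (NatTrans.congr_app (s.w (u.unop : c'.unop ⟶ c.unop)) e) a⟩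
      naturality := fun e e' g => by
        ext a
        exact Subtype.ext (funext fun c => ConcreteCategory.congr_hom ((s.π.app c.unop).naturality g) a) }
  fac s j := by
    ext e a
    rfl
  uniq s m w := by
    ext e a
    refine Subtype.ext (funext fun c => ?_)
    exact ConcreteCategory.congr_hom (NatTrans.congr_app (w c.unop) e) a

theorem subsingleton_colimit_coyoneda (a : E) :
    Subsingleton (colimit (coyoneda.obj (op a))) := by
  constructor
  intro x y
  have key : ∀ (e : E) (f : a ⟶ e), colimit.ι (coyoneda.obj (op a)) e f =
      colimit.ι (coyoneda.obj (op a)) a (𝟙 a) := by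
    intro e f
    have h := Types.Colimit.w_apply (F := coyoneda.obj (op a)) (f := f) (x := 𝟙 a)
    simpa using h
  obtain ⟨e, f, rfl⟩ := Types.jointly_surjective' x
  obtain ⟨e', f', rfl⟩ := Types.jointly_surjective' y
  rw [key e f, key e' f']

/-- The element of `coconeFun T'` associated with a cocone. -/
def elemOfCocone (T' : Cᵒᵖ ⥤ E) (s : Cocone T') : (coconeFun T').obj s.pt :=
  ⟨fun c => s.ι.app c, fun {c c'} u => s.w u⟩

/-- The cocone associated with an element of `coconeFun T'`. -/
def mkCoconeOf (T' : Cᵒᵖ ⥤ E) (e : E) (f : (coconeFun T').obj e) : Cocone T' where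
  pt := e
  ι := { app := fun c => f.1 c
         naturality := fun c c' u => by simpa using f.2 u }

theorem subsingleton_colimit_coconeFun (T' : Cᵒᵖ ⥤ E) (h : IsConnected (Cocone T')) :
    Subsingleton (colimit (coconeFun T')) := by
  haveI := h
  constructor
  intro x y
  have const : ∀ (s s' : Cocone T') (_ : s ⟶ s'),
      colimit.ι (coconeFun T') s.pt (elemOfCocone T' s) =
        colimit.ι (coconeFun T') s'.pt (elemOfCocone T' s') := by
    intro s s' m
    have hw := Types.Colimit.w_apply (F := coconeFun T') (f := m.hom) (x := elemOfCocone T' s)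
    rw [← hw]
    refine congrArg (colimit.ι (coconeFun T') s'.pt) ?_
    apply Subtype.ext
    funext c
    exact m.w c
  have allEq := constant_of_preserves_morphisms
    (fun s : Cocone T' => colimit.ι (coconeFun T') s.pt (elemOfCocone T' s)) const
  obtain ⟨e, f, rfl⟩ := Types.jointly_surjective' x
  obtain ⟨e', f', rfl⟩ := Types.jointly_surjective' y
  have h1 := allEq (mkCoconeOf T' e f) (mkCoconeOf T' e' f')
  have e1 : elemOfCocone T' (mkCoconeOf T' e f) = f := Subtype.ext rfl
  have e1' : elemOfCocone T' (mkCoconeOf T' e' f') = f' := Subtype.ext rfl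
  simp only [e1, e1'] at h1
  exact h1

theorem nonempty_colimit_coconeFun (T' : Cᵒᵖ ⥤ E) (s : Cocone T') :
    Nonempty (colimit (coconeFun T')) :=
  ⟨colimit.ι (coconeFun T') s.pt (elemOfCocone T' s)⟩

/-- Lemma A: if the category of cocones on `T'` is connected, then `colim`
preserves the limit of the associated diagram of representables. -/
theorem lemmaA (T' : Cᵒᵖ ⥤ E) (h : IsConnected (Cocone T')) :
    PreservesLimit (repDiag (C := C) T') (colim : (E ⥤ Type) ⥤ Type) := by
  haveI := h
  apply preservesLimit_of_preserves_limit_cone (coconeConeIsLimit T')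
  haveI : Nonempty (Cocone T') := IsConnected.is_nonempty
  have s0 : Cocone T' := Classical.arbitrary _
  exact
    { lift := fun s => TypeCat.ofHom fun _ => colimit.ι (coconeFun T') s0.pt (elemOfCocone T' s0)
      fac := fun s j => by
        ext x
        exact @Subsingleton.elim _ (subsingleton_colimit_coyoneda (T'.obj (op j))) _ _
      uniq := fun s m w => by
        ext x
        exact @Subsingleton.elim _ (subsingleton_colimit_coconeFun T' h) _ _ }

end Aux


section ElAux

variable {E : Type} [SmallCategory E] {C : Type} [SmallCategory C] (φ : Eᵒᵖ ⥤ Type)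

/-- Constructing a morphism in `elCat φ` from its underlying morphism in `E`. -/
def elHom {X Y : elCat φ} (f : (elProj φ).obj X ⟶ (elProj φ).obj Y)
    (h : φ.map f.op Y.unop.2 = X.unop.2) : X ⟶ Y :=
  Quiver.Hom.op (⟨f.op, h⟩ : Y.unop ⟶ X.unop)

@[simp] theorem elProj_map_elHom {X Y : elCat φ} (f : (elProj φ).obj X ⟶ (elProj φ).obj Y)
    (h : φ.map f.op Y.unop.2 = X.unop.2) : (elProj φ).map (elHom φ f h) = f := rfl

theorem elHom_prop {X Y : elCat φ} (g : X ⟶ Y) :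
    φ.map ((elProj φ).map g).op Y.unop.2 = X.unop.2 := g.unop.2

theorem elHom_ext {X Y : elCat φ} {g h : X ⟶ Y}
    (w : (elProj φ).map g = (elProj φ).map h) : g = h :=
  Quiver.Hom.unop_inj (Subtype.ext (Quiver.Hom.unop_inj w))

/-- Evaluating the weighted colimit of a representable into the weight. -/
def evalCocone (a : E) : Cocone (elProj φ ⋙ coyoneda.obj (op a)) where
  pt := φ.obj (op a)
  ι :=
    { app := fun X => TypeCat.ofHom fun g => φ.map g.op X.unop.2
      naturality := fun X Y h => by
        ext g
        show φ.map (g ≫ (elProj φ).map h).op Y.unop.2 = φ.map g.op X.unop.2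
        rw [op_comp]
        exact (φ.map_comp_apply _ _ _).trans (congrArg (fun z => φ.map g.op z) (elHom_prop φ h)) }

/-- Elementwise action of `wColim φ` on maps, on colimit generators. -/
theorem wColim_map_apply {F G : E ⥤ Type} (η : F ⟶ G) (X : elCat φ)
    (x : F.obj ((elProj φ).obj X)) :
    (wColim φ).map η (colimit.ι (elProj φ ⋙ F) X x) =
      colimit.ι (elProj φ ⋙ G) X (η.app ((elProj φ).obj X) x) :=
  ConcreteCategory.congr_hom (colimit.ι_map (F := elProj φ ⋙ F) (G := elProj φ ⋙ G)
    (Functor.whiskerLeft (elProj φ) η) X) x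

variable (T : Cᵒᵖ ⥤ elCat φ)

/-- The distinguished point of the weighted colimit of the `j`-th representable. -/
noncomputable def zeta (j : C) :
    colimit (elProj φ ⋙ (repDiag (T ⋙ elProj φ)).obj j) :=
  colimit.ι (elProj φ ⋙ (repDiag (T ⋙ elProj φ)).obj j) (T.obj (op j))
    (𝟙 ((T ⋙ elProj φ).obj (op j)))

theorem zeta_naturality {j j' : C} (u : j ⟶ j') :
    (wColim φ).map ((repDiag (T ⋙ elProj φ)).map u) (zeta φ T j) = zeta φ T j' := by
  refine (wColim_map_apply φ ((repDiag (T ⋙ elProj φ)).map u) (T.obj (op j))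
    (𝟙 ((T ⋙ elProj φ).obj (op j)))).trans ?_
  refine Eq.trans ?_ (Types.Colimit.w_apply
    (F := elProj φ ⋙ (repDiag (T ⋙ elProj φ)).obj j')
    (f := T.map u.op) (x := 𝟙 ((T ⋙ elProj φ).obj (op j'))))
  refine congrArg
    (colimit.ι (elProj φ ⋙ (repDiag (T ⋙ elProj φ)).obj j') (T.obj (op j))) ?_
  show (T ⋙ elProj φ).map u.op ≫ 𝟙 _ = 𝟙 _ ≫ (elProj φ).map (T.map u.op)
  simp [Functor.comp_map]

/-- The cone over the image diagram singling out the point `ζ`. -/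
noncomputable def zetaCone : Cone (repDiag (T ⋙ elProj φ) ⋙ wColim φ) where
  pt := PUnit
  π :=
    { app := fun j => TypeCat.ofHom fun _ => zeta φ T j
      naturality := fun j j' u => by
        ext x
        exact (zeta_naturality φ T u).symm }

/-- Goodness of a node of the colimit of cocones. -/
def goodNode (X : elCat φ) (f : (elProj φ ⋙ coconeFun (T ⋙ elProj φ)).obj X) : Prop :=
  ∀ j : Cᵒᵖ, φ.map (f.1 j).op X.unop.2 = (T.obj j).unop.2

/-- The cocone on `T` associated with a good node. -/
def coconeOfGood {X : elCat φ} {f : (elProj φ ⋙ coconeFun (T ⋙ elProj φ)).obj X}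
    (h : goodNode φ T X f) : Cocone T where
  pt := X
  ι :=
    { app := fun j => elHom φ (f.1 j) (h j)
      naturality := fun j j' u => by
        apply elHom_ext
        simpa using f.2 u }

theorem coconeOfGood_ι_app {X : elCat φ} {f : (elProj φ ⋙ coconeFun (T ⋙ elProj φ)).obj X}
    (h : goodNode φ T X f) (j : Cᵒᵖ) :
    (coconeOfGood φ T h).ι.app j = elHom φ (f.1 j) (h j) := rfl

/-- The node associated with a cocone on `T`. -/
def nodeOfCocone (s : Cocone T) :
    (elProj φ ⋙ coconeFun (T ⋙ elProj φ)).obj s.pt :=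
  ⟨fun j => (elProj φ).map (s.ι.app j), fun {j j'} u => by
    show (elProj φ).map (T.map u) ≫ (elProj φ).map (s.ι.app j') = (elProj φ).map (s.ι.app j)
    rw [← Functor.map_comp, s.w u]⟩

theorem goodNode_nodeOfCocone (s : Cocone T) : goodNode φ T s.pt (nodeOfCocone φ T s) :=
  fun j => elHom_prop φ (s.ι.app j)

theorem eqvgen_good_zigzag
    (n m : Σ X : elCat φ, (elProj φ ⋙ coconeFun (T ⋙ elProj φ)).obj X)
    (hrel : Relation.EqvGen (Functor.ColimitTypeRel (elProj φ ⋙ coconeFun (T ⋙ elProj φ))) n m) :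
    (goodNode φ T n.1 n.2 ↔ goodNode φ T m.1 m.2) ∧
      ∀ (hn : goodNode φ T n.1 n.2) (hm : goodNode φ T m.1 m.2),
        Zigzag (coconeOfGood φ T hn) (coconeOfGood φ T hm) := by
  induction hrel with
  | rel x y h =>
    obtain ⟨g, hy⟩ := h
    have hcomp : ∀ j : Cᵒᵖ,
        φ.map ((y.2).1 j).op y.1.unop.2 = φ.map ((x.2).1 j).op x.1.unop.2 := by
      intro j
      rw [hy]
      show φ.map (((x.2).1 j ≫ (elProj φ).map g).op) y.1.unop.2 = _
      rw [op_comp]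
      exact (φ.map_comp_apply _ _ _).trans (congrArg (fun z => φ.map ((x.2).1 j).op z) (elHom_prop φ g))
    constructor
    · constructor
      · intro hn j
        exact (hcomp j).trans (hn j)
      · intro hm j
        exact (hcomp j).symm.trans (hm j)
    · intro hn hm
      refine zag_of_hom ?_
      refine { hom := g, w := fun j => ?_ }
      apply elHom_ext
      simp only [Functor.map_comp, coconeOfGood_ι_app, elProj_map_elHom]
      exact (congrFun (congrArg Subtype.val hy) j).symm
  | refl x => exact ⟨Iff.rfl, fun hn hm => Relation.ReflTransGen.refl⟩
  | symm x y h ih => exact ⟨ih.1.symm, fun hy hx => Zigzag.symm (ih.2 hx hy)⟩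
  | trans x y z hxy hyz ih1 ih2 =>
    exact ⟨ih1.1.trans ih2.1, fun hx hz =>
      Relation.ReflTransGen.trans (ih1.2 hx (ih1.1.mp hx)) (ih2.2 (ih1.1.mp hx) hz)⟩

end ElAux


section LemmaB

variable {E : Type} [SmallCategory E] {C : Type} [SmallCategory C]

/-- Lemma B: if `wColim φ` preserves the limit of the diagram of representables
associated with `T : Cᵒᵖ ⥤ el(φ)`, then the category of cocones on `T` is connected. -/
theorem lemmaB (φ : Eᵒᵖ ⥤ Type) (T : Cᵒᵖ ⥤ elCat φ)
    (hP : PreservesLimit (repDiag (T ⋙ elProj φ)) (wColim φ)) :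
    IsConnected (Cocone T) := by
  haveI := hP
  have hl : IsLimit ((wColim φ).mapCone (coconeCone (T ⋙ elProj φ))) :=
    isLimitOfPreserves (wColim φ) (coconeConeIsLimit (T ⋙ elProj φ))
  have legs : ∀ (j : C) (X : elCat φ) (f : (elProj φ ⋙ coconeFun (T ⋙ elProj φ)).obj X),
      ((wColim φ).mapCone (coconeCone (T ⋙ elProj φ))).π.app j
          (colimit.ι (elProj φ ⋙ coconeFun (T ⋙ elProj φ)) X f) =
        colimit.ι (elProj φ ⋙ (repDiag (T ⋙ elProj φ)).obj j) X (f.1 (op j)) :=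
    fun j X f => wColim_map_apply φ ((coconeCone (T ⋙ elProj φ)).π.app j) X f
  have hfac : ∀ j : C,
      ((wColim φ).mapCone (coconeCone (T ⋙ elProj φ))).π.app j
          (hl.lift (zetaCone φ T) PUnit.unit) = zeta φ T j :=
    fun j => ConcreteCategory.congr_hom (hl.fac (zetaCone φ T) j) PUnit.unit
  obtain ⟨X0, f0, hX0⟩ := Types.jointly_surjective'
    (F := elProj φ ⋙ coconeFun (T ⋙ elProj φ)) (hl.lift (zetaCone φ T) PUnit.unit)
  have hgood0 : goodNode φ T X0 f0 := by
    intro j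
    have hj : colimit.ι (elProj φ ⋙ (repDiag (T ⋙ elProj φ)).obj j.unop) X0
        (f0.1 (op j.unop)) = zeta φ T j.unop := by
      rw [← legs j.unop X0 f0, hX0]
      exact hfac j.unop
    have h1 := ConcreteCategory.congr_hom (colimit.ι_desc
      (evalCocone φ ((T ⋙ elProj φ).obj (op j.unop))) X0) (f0.1 (op j.unop))
    have h2 := ConcreteCategory.congr_hom (colimit.ι_desc
      (evalCocone φ ((T ⋙ elProj φ).obj (op j.unop))) (T.obj (op j.unop)))
      (𝟙 ((T ⋙ elProj φ).obj (op j.unop)))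
    have h3 := congrArg
      (colimit.desc _ (evalCocone φ ((T ⋙ elProj φ).obj (op j.unop)))) hj
    have h4 := (h1.symm.trans h3).trans h2
    have h5 : φ.map (𝟙 ((T ⋙ elProj φ).obj (op j.unop))).op (T.obj j).unop.2 =
        (T.obj j).unop.2 := φ.map_id_apply _ _
    exact h4.trans h5
  haveI : Nonempty (Cocone T) := ⟨coconeOfGood φ T hgood0⟩
  apply zigzag_isConnected
  intro s1 s2
  have hnode : ∀ (s : Cocone T) (j : C),
      ((wColim φ).mapCone (coconeCone (T ⋙ elProj φ))).π.app j
          (colimit.ι (elProj φ ⋙ coconeFun (T ⋙ elProj φ)) s.pt (nodeOfCocone φ T s))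
        = zeta φ T j := by
    intro s j
    rw [legs j s.pt (nodeOfCocone φ T s)]
    have hw := Types.Colimit.w_apply
      (F := elProj φ ⋙ (repDiag (T ⋙ elProj φ)).obj j)
      (f := s.ι.app (op j)) (x := 𝟙 ((T ⋙ elProj φ).obj (op j)))
    refine Eq.trans ?_ hw
    refine congrArg (colimit.ι (elProj φ ⋙ (repDiag (T ⋙ elProj φ)).obj j) s.pt) ?_
    show (nodeOfCocone φ T s).1 (op j) = 𝟙 _ ≫ (elProj φ).map (s.ι.app (op j))
    simp [nodeOfCocone]
  have huniq : ∀ s : Cocone T,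
      TypeCat.ofHom (fun _ : PUnit => colimit.ι (elProj φ ⋙ coconeFun (T ⋙ elProj φ)) s.pt
        (nodeOfCocone φ T s)) = hl.lift (zetaCone φ T) := by
    intro s
    refine hl.uniq (zetaCone φ T) _ (fun j => ?_)
    ext x
    exact hnode s j
  have heq : colimit.ι (elProj φ ⋙ coconeFun (T ⋙ elProj φ)) s1.pt (nodeOfCocone φ T s1)
      = colimit.ι (elProj φ ⋙ coconeFun (T ⋙ elProj φ)) s2.pt (nodeOfCocone φ T s2) :=
    (ConcreteCategory.congr_hom (huniq s1) PUnit.unit).trans (ConcreteCategory.congr_hom (huniq s2) PUnit.unit).symm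
  have hzz := (eqvgen_good_zigzag φ T ⟨s1.pt, nodeOfCocone φ T s1⟩
      ⟨s2.pt, nodeOfCocone φ T s2⟩ (Types.colimit_eq heq)).2
      (goodNode_nodeOfCocone φ T s1) (goodNode_nodeOfCocone φ T s2)
  have hconn : ∀ s : Cocone T, Zigzag s (coconeOfGood φ T (goodNode_nodeOfCocone φ T s)) := by
    intro s
    refine zag_of_hom { hom := 𝟙 s.pt, w := fun j => ?_ }
    apply elHom_ext
    simp [coconeOfGood_ι_app, nodeOfCocone]
    exact congrArg (elProj φ).map (Category.comp_id _)
  exact Relation.ReflTransGen.trans ((hconn s1).trans hzz) (Zigzag.symm (hconn s2))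

end LemmaB

section Punit

variable {E : Type} [SmallCategory E]

/-- The terminal weight. -/
def punitWeight (E : Type) [SmallCategory E] : Eᵒᵖ ⥤ Type := (Functor.const Eᵒᵖ).obj PUnit

/-- Objects of `el(punitWeight)` coming from objects of `E`. -/
def toEl (e : E) : elCat (punitWeight E) := op ⟨op e, PUnit.unit⟩

theorem toEl_proj (X : elCat (punitWeight E)) :
    toEl ((elProj (punitWeight E)).obj X) = X := rfl

/-- The comparison cocone. -/
noncomputable def elimCocone (F : E ⥤ Type) : Cocone F where
  pt := colimit (elProj (punitWeight E) ⋙ F)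
  ι :=
    { app := fun e => colimit.ι (elProj (punitWeight E) ⋙ F) (toEl e)
      naturality := fun e e' g => by
        exact (colimit.w (elProj (punitWeight E) ⋙ F)
          (elHom (punitWeight E) (X := toEl e) (Y := toEl e') g rfl)).trans (Category.comp_id _).symm }

/-- `colim` is isomorphic to the weighted colimit functor for the terminal weight. -/
noncomputable def colimIso (E : Type) [SmallCategory E] :
    (colim : (E ⥤ Type) ⥤ Type) ≅ wColim (punitWeight E) :=
  NatIso.ofComponents
    (fun F =>
      { hom := colimit.desc F (elimCocone F)
        inv := colimit.pre F (elProj (punitWeight E))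
        hom_inv_id := by
          apply colimit.hom_ext
          intro e
          simp only [elimCocone, colimit.ι_desc_assoc, colimit.ι_pre]
          exact (colimit.ι_desc_assoc (elimCocone F) e (colimit.pre F (elProj (punitWeight E)))).trans
            ((colimit.ι_pre F (elProj (punitWeight E)) (toEl e)).trans (Category.comp_id _).symm)
        inv_hom_id := by
          apply colimit.hom_ext
          intro X
          show colimit.ι (elProj (punitWeight E) ⋙ F) X ≫
              colimit.pre F (elProj (punitWeight E)) ≫ colimit.desc F (elimCocone F) =
            colimit.ι (elProj (punitWeight E) ⋙ F) X ≫
              𝟙 (colimit (elProj (punitWeight E) ⋙ F))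
          rw [← Category.assoc, colimit.ι_pre, colimit.ι_desc]
          exact (Category.comp_id _).symm })
    (fun {F G} η => by
      apply colimit.hom_ext
      intro e
      simp only [wColim, elimCocone, Functor.comp_map, Functor.whiskeringLeft_obj_map,
        colimit.ι_map, colimit.ι_map_assoc, colimit.ι_desc, colimit.ι_desc_assoc,
        Functor.whiskerLeft_app]
      exact (colimit.ι_map (Functor.whiskerLeft (elProj (punitWeight E)) η) (toEl e)).symm)

end Punit

section Strict

variable {E : Type} [SmallCategory E] {C : Type} [SmallCategory C]

/-- Strictification of a diagram of representables. -/
noncomputable def strictify (K : C ⥤ E ⥤ Type)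
    (hK : ∀ c : C, ∃ e : E, Nonempty (K.obj c ≅ coyoneda.obj (op e))) : Cᵒᵖ ⥤ E where
  obj X := (hK X.unop).choose
  map {X Y} g := (coyoneda.preimage ((hK Y.unop).choose_spec.some.inv ≫ K.map g.unop ≫
    (hK X.unop).choose_spec.some.hom)).unop
  map_id X := by
    apply Quiver.Hom.op_inj
    apply coyoneda.map_injective
    simp
  map_comp {X Y Z} g h := by
    apply Quiver.Hom.op_inj
    apply coyoneda.map_injective
    simp

/-- The diagram of representables on the strictification is isomorphic to `K`. -/
noncomputable def strictifyIso (K : C ⥤ E ⥤ Type)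
    (hK : ∀ c : C, ∃ e : E, Nonempty (K.obj c ≅ coyoneda.obj (op e))) :
    repDiag (strictify K hK) ≅ K :=
  NatIso.ofComponents (fun c => ((hK c).choose_spec.some).symm)
    (fun {c c'} u => by
      simp [repDiag, strictify])

end Strict

/-- A class `𝔻` of small categories is sound iff every small
category `E` is `𝔻`-filtered provided that, for every small category `D` with
`Dᵒᵖ` in `𝔻` and every functor `T : D ⥤ E`, the category of cocones on `T` is
nonempty and connected. -/
theorem soundness_iff_cocones_criterion (𝔻 : CatClass) :
    DSound 𝔻 ↔
      ∀ (E : Type) [SmallCategory E],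
        (∀ C : SmallCat, 𝔻 C → ∀ T : C.Cᵒᵖ ⥤ E, IsConnected (Cocone T)) →
        DFiltered 𝔻 E := by
  constructor
  · intro hS E _ hE Cs hC
    haveI := hS E (punitWeight E)
      (fun Cs' hC' K hrep => by
        haveI h1 : PreservesLimit (repDiag (strictify K hrep)) (colim : (E ⥤ Type) ⥤ Type) :=
          lemmaA (strictify K hrep) (hE Cs' hC' (strictify K hrep))
        haveI h2 : PreservesLimit K (colim : (E ⥤ Type) ⥤ Type) :=
          preservesLimit_of_iso_diagram colim (strictifyIso K hrep)
        exact preservesLimit_of_natIso K (colimIso E)) Cs hC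
    exact preservesLimitsOfShape_of_natIso (colimIso E).symm
  · intro hR E _ φ hK Cs hC
    haveI h1 : PreservesLimitsOfShape Cs.C (colim : (elCat φ ⥤ Type) ⥤ Type) :=
      hR (elCat φ)
        (fun Cs' hC' T =>
          lemmaB φ T (hK Cs' hC' (repDiag (T ⋙ elProj φ))
            (fun c => ⟨(T ⋙ elProj φ).obj (op c), ⟨Iso.refl _⟩⟩))) Cs hC
    show PreservesLimitsOfShape Cs.C
      ((Functor.whiskeringLeft (elCat φ) E Type).obj (elProj φ) ⋙ colim)
    infer_instance

end Paper
end

section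
/- Let E be a small category, φ : Eᵒᵖ ⥤ Set a weight, I a finite set, and (eᵢ)_{i∈I} a family of objects of E. The canonical map can : Colim_φ(e ↦ ∏_{i∈I} E(eᵢ, e)) → ∏_{i∈I} φ(eᵢ), sending the class represented by an object (e, x) of el(φ) together with morphisms tᵢ : eᵢ → e of E to the tuple (φ(tᵢ)(x))_{i∈I}, is injective if and only if for every tuple (xᵢ)_{i∈I} with xᵢ ∈ φ(eᵢ), any two cocones in el(φ) over the discrete family ((eᵢ, xᵢ))_{i∈I} are connected by a finite zig-zag of morphisms of cocones (morphisms of el(φ) between the vertices commuting with the cocone injections). -/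
open CategoryTheory CategoryTheory.Limits Opposite
namespace Paper
/-- The functor `e ↦ ∏_{i ∈ I} E(eᵢ, e)`. -/
def prodHomFunctor {E : Type} [SmallCategory E] {I : Type} (e : I → E) : E ⥤ Type where
  obj x := ∀ i, e i ⟶ x
  map f := TypeCat.ofHom (fun t => fun i => t i ≫ f)
  map_id := by intro x; ext t; simp
  map_comp := by intro x y z f g; ext t; simp

/-- The cocone defining the canonical map
`Colim_φ (e ↦ ∏ᵢ E(eᵢ, e)) → ∏ᵢ φ(eᵢ)`. -/
def canProdCocone {E : Type} [SmallCategory E] (φ : Eᵒᵖ ⥤ Type)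
    {I : Type} (e : I → E) :
    Cocone (elProj φ ⋙ prodHomFunctor e) where
  pt := ∀ i, φ.obj (op (e i))
  ι :=
    { app := fun j => TypeCat.ofHom (fun t i => φ.map (t i).op j.unop.2)
      naturality := fun j j' f => by
        ext t
        funext i
        simp only [TypeCat.Fun.toFun_apply, types_comp_apply, TypeCat.ofHom_apply,
          Functor.const_obj_map]
        exact (Functor.map_comp_apply φ f.unop.1 (t i).op _).trans
          (congrArg _ f.unop.property) }

/-- The canonical map `can : Colim_φ (e ↦ ∏ᵢ E(eᵢ, e)) → ∏ᵢ φ(eᵢ)`, sending the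
class of `((e, x), (tᵢ : eᵢ ⟶ e)ᵢ)` to `(φ(tᵢ)(x))ᵢ`. -/
noncomputable def canProd {E : Type} [SmallCategory E] (φ : Eᵒᵖ ⥤ Type)
    {I : Type} (e : I → E) :
    (wColim φ).obj (prodHomFunctor e) → ∀ i, φ.obj (op (e i)) :=
  fun y => colimit.desc (elProj φ ⋙ prodHomFunctor e) (canProdCocone φ e) y

section
variable {E : Type} [SmallCategory E] (φ : Eᵒᵖ ⥤ Type) {I : Type} (e : I → E)
  (x : ∀ i, φ.obj (op (e i)))

abbrev Fd : elCat φ ⥤ Type := elProj φ ⋙ prodHomFunctor e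

def mkCocone (j : elCat φ) (t : (Fd φ e).obj j)
    (h : ∀ i, φ.map (t i).op j.unop.2 = x i) :
    Cocone (Discrete.functor (fun i => elObj φ (e i) (x i))) where
  pt := j
  ι := Discrete.natTrans fun ⟨i⟩ =>
    Quiver.Hom.op
      (show j.unop ⟶ (⟨op (e i), x i⟩ : Functor.Elements φ) from ⟨(t i).op, h i⟩)

def cData (c : Cocone (Discrete.functor (fun i => elObj φ (e i) (x i)))) :
    (Fd φ e).obj c.pt :=
  fun i => (c.ι.app ⟨i⟩).unop.val.unop

lemma cData_spec (c : Cocone (Discrete.functor (fun i => elObj φ (e i) (x i)))) (i : I) :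
    φ.map (cData φ e x c i).op c.pt.unop.2 = x i :=
  (c.ι.app ⟨i⟩).unop.property

lemma cData_mk (j : elCat φ) (t : (Fd φ e).obj j)
    (h : ∀ i, φ.map (t i).op j.unop.2 = x i) :
    cData φ e x (mkCocone φ e x j t h) = t := by funext i; rfl

lemma mk_cData (c : Cocone (Discrete.functor (fun i => elObj φ (e i) (x i)))) :
    mkCocone φ e x c.pt (cData φ e x c) (cData_spec φ e x c) = c := by
  obtain ⟨pt, ι⟩ := c
  show Cocone.mk pt _ = Cocone.mk pt ι
  congr 1


lemma canProd_ι (j : elCat φ) (t : (Fd φ e).obj j) (i : I) :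
    canProd φ e (colimit.ι (Fd φ e) j t) i = φ.map (t i).op j.unop.2 := by
  have := ConcreteCategory.congr_hom (colimit.ι_desc (canProdCocone φ e) j) t
  exact congrFun this i

/-- single morphism of cocones from a Quot.Rel step -/
def step_hom (j j' : elCat φ) (f : j ⟶ j') (t : (Fd φ e).obj j)
    (t' : (Fd φ e).obj j') (ht : ∀ i, t' i = t i ≫ (elProj φ).map f)
    (h : ∀ i, φ.map (t i).op j.unop.2 = x i)
    (h' : ∀ i, φ.map (t' i).op j'.unop.2 = x i) :
    mkCocone φ e x j t h ⟶ mkCocone φ e x j' t' h' :=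
  { hom := f
    w := by
      rintro ⟨i⟩
      apply Quiver.Hom.unop_inj
      apply Subtype.ext
      show _ = (t' i).op
      rw [ht i]
      rfl }

lemma eqv_zigzag (p q : Σ j : elCat φ, (Fd φ e).obj j)
    (hpq : Relation.EqvGen ((Fd φ e).ColimitTypeRel) p q) :
    ∀ (hp : ∀ i, φ.map (p.2 i).op p.1.unop.2 = x i)
      (hq : ∀ i, φ.map (q.2 i).op q.1.unop.2 = x i),
      Zigzag (mkCocone φ e x p.1 p.2 hp) (mkCocone φ e x q.1 q.2 hq) := by
  have key : ∀ a b : Σ j : elCat φ, (Fd φ e).obj j,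
      Relation.EqvGen ((Fd φ e).ColimitTypeRel) a b →
      colimit.ι (Fd φ e) a.1 a.2 = colimit.ι (Fd φ e) b.1 b.2 := by
    intro a b hab
    induction hab with
    | rel a b r => obtain ⟨f, hf⟩ := r; exact Types.colimit_sound f hf.symm
    | refl => rfl
    | symm _ _ _ ih => exact ih.symm
    | trans _ _ _ _ _ ih1 ih2 => exact ih1.trans ih2
  induction hpq with
  | rel a b r =>
    obtain ⟨f, hf⟩ := r
    obtain ⟨j, t⟩ := a
    obtain ⟨j', t'⟩ := b
    intro ha hb
    exact Relation.ReflTransGen.single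
      (Or.inl ⟨step_hom φ e x j j' f t t' (fun i => congrFun hf i) ha hb⟩)
  | refl a =>
    intro ha hb
    exact Relation.ReflTransGen.refl
  | symm a b hab ih =>
    intro ha hb
    exact zigzag_symmetric.symm _ _ (ih hb ha)
  | trans a b c hab hbc ih1 ih2 =>
    intro ha hc
    have hb : ∀ i, φ.map (b.2 i).op b.1.unop.2 = x i := by
      intro i
      have e1 := key a b hab
      have : canProd φ e (colimit.ι (Fd φ e) b.1 b.2) i
          = canProd φ e (colimit.ι (Fd φ e) a.1 a.2) i := by rw [e1]
      rw [canProd_ι, canProd_ι] at this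
      rw [this, ha]
    exact Relation.ReflTransGen.trans (ih1 ha hb) (ih2 hb hc)

/-- value of a cocone in the colimit -/
noncomputable def cVal (c : Cocone (Discrete.functor (fun i => elObj φ (e i) (x i)))) :
    colimit (Fd φ e) :=
  colimit.ι (Fd φ e) c.pt (cData φ e x c)

lemma cVal_hom {c c' : Cocone (Discrete.functor (fun i => elObj φ (e i) (x i)))}
    (m : c ⟶ c') : cVal φ e x c = cVal φ e x c' := by
  have hd : cData φ e x c' = (Fd φ e).map m.hom (cData φ e x c) := by
    funext i
    have w := m.w ⟨i⟩
    have := congrArg (fun (g : _ ⟶ c'.pt) => g.unop.val.unop) w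
    exact this.symm
  rw [cVal, cVal, hd]
  exact Types.colimit_sound m.hom rfl

lemma cVal_zigzag {c c' : Cocone (Discrete.functor (fun i => elObj φ (e i) (x i)))}
    (h : Zigzag c c') : cVal φ e x c = cVal φ e x c' := by
  induction h with
  | refl => rfl
  | tail _ hz ih =>
    rcases hz with ⟨⟨m⟩⟩ | ⟨⟨m⟩⟩
    · exact ih.trans (cVal_hom φ e x m)
    · exact ih.trans (cVal_hom φ e x m).symm

end

/-- The canonical map `can : Colim_φ(e ↦ ∏ᵢ E(eᵢ,e)) → ∏ᵢ φ(eᵢ)`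
is injective iff for every tuple `(xᵢ)ᵢ`, any two cocones in `el(φ)` over the
discrete family `((eᵢ, xᵢ))ᵢ` are connected by a finite zig-zag of morphisms of
cocones. -/
theorem canProd_injective_iff (E : Type) [SmallCategory E] (φ : Eᵒᵖ ⥤ Type)
    (I : Type) [Fintype I] (e : I → E) :
    Function.Injective (canProd φ e) ↔
      ∀ x : ∀ i, φ.obj (op (e i)),
        ∀ c c' : Cocone (Discrete.functor (fun i => elObj φ (e i) (x i))),
          Zigzag c c' := by
  constructor
  · intro hinj x c c'
    have h1 : canProd φ e (cVal φ e x c) = x := by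
      funext i
      exact (canProd_ι φ e c.pt (cData φ e x c) i).trans (cData_spec φ e x c i)
    have h2 : canProd φ e (cVal φ e x c') = x := by
      funext i
      exact (canProd_ι φ e c'.pt (cData φ e x c') i).trans (cData_spec φ e x c' i)
    have hv : cVal φ e x c = cVal φ e x c' := hinj (h1.trans h2.symm)
    have heq := Types.colimit_eq (F := Fd φ e)
      (show colimit.ι (Fd φ e) c.pt (cData φ e x c)
          = colimit.ι (Fd φ e) c'.pt (cData φ e x c') from hv)
    have z := eqv_zigzag φ e x ⟨c.pt, cData φ e x c⟩ ⟨c'.pt, cData φ e x c'⟩ heq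
      (cData_spec φ e x c) (cData_spec φ e x c')
    rwa [mk_cData, mk_cData] at z
  · intro h a b hab
    obtain ⟨j, t, rfl⟩ := Types.jointly_surjective' (F := Fd φ e) a
    obtain ⟨j', t', rfl⟩ := Types.jointly_surjective' (F := Fd φ e) b
    set x := canProd φ e (colimit.ι (Fd φ e) j t) with hx
    have hp : ∀ i, φ.map (t i).op j.unop.2 = x i := fun i =>
      (canProd_ι φ e j t i).symm
    have hq : ∀ i, φ.map (t' i).op j'.unop.2 = x i := fun i =>
      (canProd_ι φ e j' t' i).symm.trans (congrFun hab i).symm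
    have z := h x (mkCocone φ e x j t hp) (mkCocone φ e x j' t' hq)
    have hv := cVal_zigzag φ e x z
    exact hv


end Paper
end

section
/- Let E be a small category and φ : Eᵒᵖ ⥤ Set a weight. For a finite category 𝒞 and a functor T : 𝒞 ⥤ E, let can_T : Colim_φ(e ↦ Cocones(T, e)) → Lifts(T) be the canonical map, where Cocones(T, e) is the set of cocones on T with vertex e and Lifts(T) is the set of functors K : 𝒞 ⥤ el(φ) with p ⋙ K = T; can_T sends the class represented by an object (e, x) of el(φ) together with a cocone (t_c : T c → e)_{c∈𝒞} to the lift c ↦ (T c, φ(t_c)(x)). Then: can_T is surjective for every finite category 𝒞 and every functor T : 𝒞 ⥤ E if and only if every finite diagram in el(φ) admits a cocone; and can_T is injective for every finite 𝒞 and every T if and only if any two cocones over the same finite diagram in el(φ) are connected by a finite zig-zag of morphisms of cocones. -/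
open CategoryTheory CategoryTheory.Limits Opposite
namespace Paper
def coconesFunctor {D E : Type} [SmallCategory D] [SmallCategory E] (T : D ⥤ E) :
    E ⥤ Type :=
  Functor.const D ⋙ coyoneda.obj (op T)

/-- A functor `C ⥤ el(φ)` lifting the data `c ↦ (T c, y c)`. -/
def liftAux {E C : Type} [SmallCategory E] [SmallCategory C] (φ : Eᵒᵖ ⥤ Type)
    (T : C ⥤ E) (y : ∀ c : C, φ.obj (op (T.obj c)))
    (hy : ∀ (c c' : C) (m : c ⟶ c'), φ.map (T.map m).op (y c') = y c) :
    C ⥤ elCat φ where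
  obj c := elObj φ (T.obj c) (y c)
  map {c c'} m := (CategoryOfElements.homMk _ _ (T.map m).op (hy c c' m)).op
  map_id c := by
    apply Quiver.Hom.unop_inj
    apply CategoryOfElements.ext
    simp [elObj]
    rfl
  map_comp {c c' c''} m m' := by
    apply Quiver.Hom.unop_inj
    apply CategoryOfElements.ext
    simp [elObj]
    rfl

theorem liftAux_congr {E C : Type} [SmallCategory E] [SmallCategory C]
    (φ : Eᵒᵖ ⥤ Type) (T : C ⥤ E) {y y' : ∀ c : C, φ.obj (op (T.obj c))}
    (h : y = y')
    (hy : ∀ (c c' : C) (m : c ⟶ c'), φ.map (T.map m).op (y c') = y c)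
    (hy' : ∀ (c c' : C) (m : c ⟶ c'), φ.map (T.map m).op (y' c') = y' c) :
    liftAux φ T y hy = liftAux φ T y' hy' := by
  subst h; rfl

theorem liftAux_factors {E C : Type} [SmallCategory E] [SmallCategory C]
    (φ : Eᵒᵖ ⥤ Type) (T : C ⥤ E) (y : ∀ c : C, φ.obj (op (T.obj c)))
    (hy : ∀ (c c' : C) (m : c ⟶ c'), φ.map (T.map m).op (y c') = y c) :
    liftAux φ T y hy ⋙ elProj φ = T := rfl


/-- The type of lifts of `T : C ⥤ E` through `p : el(φ) ⥤ E`. -/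
def Lifts {E C : Type} [SmallCategory E] [SmallCategory C] (φ : Eᵒᵖ ⥤ Type)
    (T : C ⥤ E) : Type :=
  {K : C ⥤ elCat φ // K ⋙ elProj φ = T}

/-- The cocone defining the canonical map `Colim_φ(e ↦ Cocones(T,e)) → Lifts(T)`. -/
def canLiftCocone {E C : Type} [SmallCategory E] [SmallCategory C]
    (φ : Eᵒᵖ ⥤ Type) (T : C ⥤ E) :
    Cocone (elProj φ ⋙ coconesFunctor T) where
  pt := Lifts φ T
  ι :=
    { app := fun j => TypeCat.ofHom fun t =>
        ⟨liftAux φ T (fun c => φ.map (t.app c).op j.unop.2)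
          (fun c c' m => by
            change (T ⟶ (Functor.const C).obj ((elProj φ).obj j)) at t
            have h := t.naturality m
            simp only [Functor.const_obj_map, Category.comp_id] at h
            erw [← Functor.map_comp_apply, ← op_comp, h, Category.comp_id]),
          liftAux_factors _ _ _ _⟩
      naturality := fun j j' f => by
        ext t
        change (T ⟶ (Functor.const C).obj ((elProj φ).obj j)) at t
        apply Subtype.ext
        dsimp [coconesFunctor]
        apply liftAux_congr
        funext c
        dsimp [elProj, Functor.leftOp]
        change φ.map ((t.app c ≫ (f.unop.1.unop)).op) j'.unop.2 = _
        erw [op_comp, Functor.map_comp_apply, f.unop.property]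
        rfl }

/-- The canonical map `can_T : Colim_φ(e ↦ Cocones(T, e)) → Lifts(T)`, sending the
class of `((e,x), (t_c : T c ⟶ e))` to the lift `c ↦ (T c, φ(t_c)(x))`. -/
noncomputable def canLift {E C : Type} [SmallCategory E] [SmallCategory C]
    (φ : Eᵒᵖ ⥤ Type) (T : C ⥤ E) :
    (wColim φ).obj (coconesFunctor T) → Lifts φ T :=
  fun x => colimit.desc (elProj φ ⋙ coconesFunctor T) (canLiftCocone φ T) x

section Aux

lemma elements_eqToHom_val {C : Type*} [Category C] {F : C ⥤ Type*} {x y : F.Elements}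
    (h : x = y) : (eqToHom h).val = eqToHom (congrArg Sigma.fst h) := by subst h; rfl

variable {E C : Type} [SmallCategory E] [SmallCategory C] (φ : Eᵒᵖ ⥤ Type)

theorem lift_ext (K K' : C ⥤ elCat φ) (h : K ⋙ elProj φ = K' ⋙ elProj φ)
    (hobj : ∀ c, K.obj c = K'.obj c) : K = K' := by
  refine CategoryTheory.Functor.ext hobj ?_
  intro c c' m
  apply Quiver.Hom.unop_inj
  apply CategoryOfElements.ext
  have hm := Functor.congr_hom h m
  simp only [Functor.comp_map, elProj, Functor.leftOp_map, CategoryOfElements.π] at hm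
  apply Quiver.Hom.unop_inj
  rw [hm]
  simp [elements_eqToHom_val, eqToHom_unop]

lemma elCat_hom_ext {X Y : elCat φ} (f g : X ⟶ Y)
    (h : (elProj φ).map f = (elProj φ).map g) : f = g := by
  apply Quiver.Hom.unop_inj
  apply CategoryOfElements.ext
  exact congrArg Quiver.Hom.op h

@[simp] lemma elProj_map_homMk_op (x y : φ.Elements) (f : x.1 ⟶ y.1)
    (hf : φ.map f x.snd = y.snd) :
    (elProj φ).map (CategoryOfElements.homMk x y f hf).op = f.unop := rfl

lemma elProj_map_eqToHom_comp {X X' Y : elCat φ} (h : X = X') (g : X' ⟶ Y)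
    (hX : (elProj φ).obj X = (elProj φ).obj X') :
    (elProj φ).map (eqToHom h ≫ g) = eqToHom hX ≫ (elProj φ).map g := by
  subst h; simp

variable (K : C ⥤ elCat φ)

/-- The data `c ↦ φ(t_c)(x)` extracted from an element `(j, t)` of the diagram. -/
def Ydat (j : elCat φ) (t : (K ⋙ elProj φ) ⟶ (Functor.const C).obj ((elProj φ).obj j)) :
    ∀ c : C, φ.obj (op ((K ⋙ elProj φ).obj c)) :=
  fun c => φ.map (t.app c).op j.unop.2

lemma Ydat_nat (j : elCat φ) (t : (K ⋙ elProj φ) ⟶ (Functor.const C).obj ((elProj φ).obj j))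
    (c c' : C) (m : c ⟶ c') :
    φ.map ((K ⋙ elProj φ).map m).op (Ydat φ K j t c') = Ydat φ K j t c := by
  unfold Ydat
  have h := t.naturality m
  simp only [Functor.const_obj_map, Category.comp_id] at h
  erw [← Functor.map_comp_apply, ← op_comp, h, Category.comp_id]

/-- The fiber condition: the element `(j, t)` maps to the lift `K` under `can_T`. -/
abbrev fibP (j : elCat φ) (t : (K ⋙ elProj φ) ⟶ (Functor.const C).obj ((elProj φ).obj j)) : Prop :=
  liftAux φ (K ⋙ elProj φ) (Ydat φ K j t) (Ydat_nat φ K j t) = K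

lemma app_aux (j : elCat φ) (t : (K ⋙ elProj φ) ⟶ (Functor.const C).obj ((elProj φ).obj j))
    (h : fibP φ K j t) (c : C) :
    (elProj φ).map (eqToHom ((Functor.congr_obj h c).symm) ≫
      (CategoryOfElements.homMk j.unop (φ.elementsMk (op ((K ⋙ elProj φ).obj c)) (Ydat φ K j t c))
        (t.app c).op rfl).op) = t.app c :=
  by
  refine (elProj_map_eqToHom_comp φ _ _ ?_).trans ?_
  · rfl
  · exact Category.id_comp _

/-- The cocone on `K` determined by an element `(j, t)` in the fiber over `K`. -/
def coconeOfElem (j : elCat φ) (t : (K ⋙ elProj φ) ⟶ (Functor.const C).obj ((elProj φ).obj j))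
    (h : fibP φ K j t) : Cocone K where
  pt := j
  ι :=
    { app := fun c =>
        eqToHom ((Functor.congr_obj h c).symm) ≫
          (CategoryOfElements.homMk j.unop (φ.elementsMk (op ((K ⋙ elProj φ).obj c)) (Ydat φ K j t c))
            (t.app c).op rfl).op
      naturality := by
        intro c c' m
        apply elCat_hom_ext
        have ht := t.naturality m
        simp only [Functor.const_obj_map, Category.comp_id] at ht
        exact ((elProj φ).map_comp _ _).trans
          ((congrArg (fun g => (elProj φ).map (K.map m) ≫ g) (app_aux φ K j t h c')).trans
            ((ht.trans (Category.comp_id _)).trans ((app_aux φ K j t h c).symm.trans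
              (congrArg (elProj φ).map (Category.comp_id _).symm)))) }

/-- The element of the diagram determined by a cocone on `K`. -/
def elemT (s : Cocone K) : (K ⋙ elProj φ) ⟶ (Functor.const C).obj ((elProj φ).obj s.pt) :=
  ((elProj φ).mapCocone s).ι

lemma fib_elemT (s : Cocone K) : fibP φ K s.pt (elemT φ K s) := by
  apply lift_ext
  · rfl
  · intro c
    have h2 : (⟨op ((K ⋙ elProj φ).obj c), Ydat φ K s.pt (elemT φ K s) c⟩ : φ.Elements) =
        (K.obj c).unop := by
      refine Functor.Elements.ext _ _ rfl ?_
      erw [eqToHom_refl, FunctorToTypes.map_id_apply]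
      exact (s.ι.app c).unop.property
    exact congrArg op h2

lemma fibP_iff (j : elCat φ) (t : (K ⋙ elProj φ) ⟶ (Functor.const C).obj ((elProj φ).obj j)) :
    fibP φ K j t ↔
      canLift φ (K ⋙ elProj φ)
        (colimit.ι (elProj φ ⋙ coconesFunctor (K ⋙ elProj φ)) j t) = ⟨K, rfl⟩ := by
  have h0 : canLift φ (K ⋙ elProj φ)
      (colimit.ι (elProj φ ⋙ coconesFunctor (K ⋙ elProj φ)) j t) =
      (canLiftCocone φ (K ⋙ elProj φ)).ι.app j t :=
    ConcreteCategory.congr_hom (colimit.ι_desc (canLiftCocone φ (K ⋙ elProj φ)) j) t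
  rw [h0]
  constructor
  · intro h
    exact Subtype.ext h
  · intro h
    exact congrArg Subtype.val h

lemma zag_sound (s s' : Cocone K) (f : s ⟶ s') :
    colimit.ι (elProj φ ⋙ coconesFunctor (K ⋙ elProj φ)) s.pt (elemT φ K s) =
      colimit.ι (elProj φ ⋙ coconesFunctor (K ⋙ elProj φ)) s'.pt (elemT φ K s') := by
  apply Types.colimit_sound f.hom
  apply NatTrans.ext
  funext c
  have hw := f.w c
  dsimp [elemT, coconesFunctor]
  rw [← hw, Functor.map_comp]
  rfl

lemma zigzag_sound (s s' : Cocone K) (h : Zigzag s s') :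
    colimit.ι (elProj φ ⋙ coconesFunctor (K ⋙ elProj φ)) s.pt (elemT φ K s) =
      colimit.ι (elProj φ ⋙ coconesFunctor (K ⋙ elProj φ)) s'.pt (elemT φ K s') := by
  induction h with
  | refl => rfl
  | tail h1 zg ih =>
      rcases zg with ⟨⟨f⟩⟩ | ⟨⟨f⟩⟩
      · exact ih.trans (zag_sound φ K _ _ f)
      · exact ih.trans (zag_sound φ K _ _ f).symm

lemma eqv_ι {p q : Σ j : elCat φ, (elProj φ ⋙ coconesFunctor (K ⋙ elProj φ)).obj j}
    (h : Relation.EqvGen (Functor.ColimitTypeRel (elProj φ ⋙ coconesFunctor (K ⋙ elProj φ))) p q) :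
    colimit.ι (elProj φ ⋙ coconesFunctor (K ⋙ elProj φ)) p.1 p.2 =
      colimit.ι (elProj φ ⋙ coconesFunctor (K ⋙ elProj φ)) q.1 q.2 := by
  induction h with
  | rel p q hr => exact Types.colimit_sound hr.choose hr.choose_spec.symm
  | refl => rfl
  | symm _ _ _ ih => exact ih.symm
  | trans _ _ _ _ _ ih1 ih2 => exact ih1.trans ih2

lemma roundtrip (j : elCat φ) (t : (K ⋙ elProj φ) ⟶ (Functor.const C).obj ((elProj φ).obj j))
    (h : fibP φ K j t) : elemT φ K (coconeOfElem φ K j t h) = t := by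
  apply NatTrans.ext
  funext c
  show (elProj φ).map ((coconeOfElem φ K j t h).ι.app c) = t.app c
  exact app_aux φ K j t h c

lemma coconeOfElem_elemT (s : Cocone K) :
    coconeOfElem φ K s.pt (elemT φ K s) (fib_elemT φ K s) = s := by
  obtain ⟨pt, ι⟩ := s
  unfold coconeOfElem
  congr 1
  apply NatTrans.ext
  funext c
  apply elCat_hom_ext
  exact app_aux φ K pt (elemT φ K ⟨pt, ι⟩) (fib_elemT φ K ⟨pt, ι⟩) c

lemma eqvgen_zigzag {p q : Σ j : elCat φ, (elProj φ ⋙ coconesFunctor (K ⋙ elProj φ)).obj j}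
    (h : Relation.EqvGen (Functor.ColimitTypeRel (elProj φ ⋙ coconesFunctor (K ⋙ elProj φ))) p q)
    (hp : fibP φ K p.1 p.2) (hq : fibP φ K q.1 q.2) :
    Zigzag (coconeOfElem φ K p.1 p.2 hp) (coconeOfElem φ K q.1 q.2 hq) := by
  induction h with
  | rel p q hr =>
      obtain ⟨j, t⟩ := p
      obtain ⟨j', t'⟩ := q
      obtain ⟨f, e⟩ := hr
      dsimp only at f e hp hq ⊢
      revert hq
      rw [e]
      intro hq
      refine Relation.ReflTransGen.single (Or.inl ⟨{ hom := f, w := ?_ }⟩)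
      intro c
      apply elCat_hom_ext
      exact ((elProj φ).map_comp _ _).trans
        ((congrArg (· ≫ (elProj φ).map f) (app_aux φ K j t hp c)).trans
          (app_aux φ K j' _ hq c).symm)
  | refl => exact Relation.ReflTransGen.refl
  | symm x y _ ih => exact (ih hq hp).symm
  | trans x y z h1 h2 ih1 ih2 =>
      have hy : fibP φ K y.1 y.2 := by
        refine (fibP_iff φ K y.1 y.2).2 ?_
        rw [← eqv_ι φ K h1]
        refine (fibP_iff φ K x.1 x.2).1 ?_
        exact hp
      exact (ih1 hp hy).trans (ih2 hy hq)

end Aux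

/-- The canonical maps
`can_T : Colim_φ(e ↦ Cocones(T,e)) → Lifts(T)` are surjective for all finite
categories `𝒞` and all `T : 𝒞 ⥤ E` iff every finite diagram in `el(φ)` admits a
cocone; and they are injective for all finite `𝒞` and `T` iff any two cocones
over the same finite diagram in `el(φ)` are connected by a finite zig-zag. -/
theorem canLift_surjective_injective_iff (E : Type) [SmallCategory E]
    (φ : Eᵒᵖ ⥤ Type) :
    ((∀ (C : Type) [SmallCategory C] [FinCategory C] (T : C ⥤ E),
        Function.Surjective (canLift φ T)) ↔
      (∀ (C : Type) [SmallCategory C] [FinCategory C] (K : C ⥤ elCat φ),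
        Nonempty (Cocone K))) ∧
    ((∀ (C : Type) [SmallCategory C] [FinCategory C] (T : C ⥤ E),
        Function.Injective (canLift φ T)) ↔
      (∀ (C : Type) [SmallCategory C] [FinCategory C] (K : C ⥤ elCat φ)
        (c c' : Cocone K), Zigzag c c')) := by
  constructor
  · constructor
    · intro hs C _ _ K
      obtain ⟨x, hx⟩ := hs C (K ⋙ elProj φ) ⟨K, rfl⟩
      obtain ⟨j, t, rfl⟩ := Types.jointly_surjective' x
      exact ⟨coconeOfElem φ K j t ((fibP_iff φ K j t).2 hx)⟩
    · rintro hc C _ _ T ⟨K, hK⟩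
      subst hK
      obtain ⟨s⟩ := hc C K
      exact ⟨colimit.ι (elProj φ ⋙ coconesFunctor (K ⋙ elProj φ)) s.pt (elemT φ K s),
        (fibP_iff φ K s.pt (elemT φ K s)).1 (fib_elemT φ K s)⟩
  · constructor
    · intro hi C _ _ K s s'
      have h1 := (fibP_iff φ K s.pt (elemT φ K s)).1 (fib_elemT φ K s)
      have h2 := (fibP_iff φ K s'.pt (elemT φ K s')).1 (fib_elemT φ K s')
      have h3 := hi C (K ⋙ elProj φ) (h1.trans h2.symm)
      have h4 := Types.colimit_eq h3
      have h5 := eqvgen_zigzag φ K h4 (fib_elemT φ K s) (fib_elemT φ K s')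
      rwa [coconeOfElem_elemT, coconeOfElem_elemT] at h5
    · intro hz C _ _ T x x' hxx'
      obtain ⟨j, t, rfl⟩ := Types.jointly_surjective' x
      obtain ⟨j', t', rfl⟩ := Types.jointly_surjective' x'
      let K : C ⥤ elCat φ := liftAux φ T (fun c => φ.map (t.app c).op j.unop.2)
        (fun c c' m => by
          change (T ⟶ (Functor.const C).obj ((elProj φ).obj j)) at t
          have h := t.naturality m
          simp only [Functor.const_obj_map, Category.comp_id] at h
          erw [← Functor.map_comp_apply, ← op_comp, h, Category.comp_id])
      have hfib : fibP φ K j t := rfl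
      have e1 : canLift φ T (colimit.ι (elProj φ ⋙ coconesFunctor T) j t) = ⟨K, rfl⟩ :=
        (fibP_iff φ K j t).1 hfib
      have e2 : canLift φ T (colimit.ι (elProj φ ⋙ coconesFunctor T) j' t') = ⟨K, rfl⟩ :=
        hxx'.symm.trans e1
      have hfib' : fibP φ K j' t' := (fibP_iff φ K j' t').2 e2
      have z := hz C K (coconeOfElem φ K j t hfib) (coconeOfElem φ K j' t' hfib')
      have h5 := zigzag_sound φ K _ _ z
      erw [roundtrip, roundtrip] at h5
      exact h5

end Paper
end

section
/- Let T : D ⥤ E be a functor between small categories. The colimit functor colim : (E ⥤ Set) ⥤ Set preserves the limit of the Dᵒᵖ-shaped diagram of representables d ↦ E(T d, −) in the functor category E ⥤ Set if and only if the category of cocones on T is nonempty and connected. -/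
open CategoryTheory CategoryTheory.Limits Opposite

namespace Paper

section Aux

variable {D E : Type} [SmallCategory D] [SmallCategory E] (T : D ⥤ E)

/-- The cone over `T.op ⋙ coyoneda` with apex the cocone functor `T.cocones`. -/
@[simps]
def coconesCone : Cone (T.op ⋙ coyoneda) where
  pt := T.cocones
  π :=
    { app := fun d =>
        { app := fun e => TypeCat.ofHom (fun κ => κ.app d.unop)
          naturality := fun e e' f => rfl }
      naturality := fun d d' g => by
        ext e κ
        dsimp
        simp [(κ.naturality g.unop).symm] }

/-- The cone `coconesCone T` is a limit cone. -/
def coconesConeIsLimit : IsLimit (coconesCone T) where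
  lift s :=
    { app := fun e => TypeCat.ofHom (fun x =>
        { app := fun d => (s.π.app (op d)).app e x
          naturality := fun d d' g => by
            have := ConcreteCategory.congr_hom (NatTrans.congr_app (s.w (g.op : op d' ⟶ op d)) e) x
            dsimp at this ⊢
            rw [this, Category.comp_id]
        })
      naturality := fun e e' f => by
        apply ConcreteCategory.hom_ext; intro x
        apply NatTrans.ext
        funext d
        exact ConcreteCategory.congr_hom ((s.π.app (op d)).naturality f) x }
  fac s d := by
    apply NatTrans.ext
    funext e
    apply ConcreteCategory.hom_ext; intro x
    rfl
  uniq s m hm := by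
    apply NatTrans.ext
    funext e
    apply ConcreteCategory.hom_ext; intro x
    apply NatTrans.ext
    funext d
    exact (ConcreteCategory.congr_hom (NatTrans.congr_app (hm (op d)) e) x)

/-- The value of the mapped diagram at `d` is a point. -/
noncomputable def ptEquiv (d : Dᵒᵖ) :
    ((T.op ⋙ coyoneda) ⋙ (colim : (E ⥤ Type) ⥤ Type)).obj d ≃ PUnit :=
  (Coyoneda.colimitCoyonedaIso (op (T.obj d.unop))).toEquiv

lemma subsingleton_pt (d : Dᵒᵖ) :
    Subsingleton (((T.op ⋙ coyoneda) ⋙ (colim : (E ⥤ Type) ⥤ Type)).obj d) :=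
  (ptEquiv T d).subsingleton

lemma nonempty_pt (d : Dᵒᵖ) :
    Nonempty (((T.op ⋙ coyoneda) ⋙ (colim : (E ⥤ Type) ⥤ Type)).obj d) :=
  ⟨(ptEquiv T d).symm PUnit.unit⟩

lemma nonempty_isLimit_mapCone_iff :
    Nonempty (IsLimit ((colim : (E ⥤ Type) ⥤ Type).mapCone (coconesCone T))) ↔
      Nonempty (colimit T.cocones) ∧ Subsingleton (colimit T.cocones) := by
  have hsub := subsingleton_pt T
  rw [Types.isLimit_iff]
  constructor
  · intro h
    have hsec : ((T.op ⋙ coyoneda) ⋙ (colim : (E ⥤ Type) ⥤ Type)).sections :=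
      ⟨fun d => (nonempty_pt T d).some, fun {d d'} f => (hsub d').elim _ _⟩
    obtain ⟨x, -, hu⟩ := h hsec.1 hsec.2
    refine ⟨⟨x⟩, ⟨fun a b => ?_⟩⟩
    have ha := hu a (fun d => (hsub d).elim _ _)
    have hb := hu b (fun d => (hsub d).elim _ _)
    exact ha.trans hb.symm
  · rintro ⟨⟨x⟩, hs⟩ s hs'
    exact ⟨x, fun d => (hsub d).elim _ _, fun y _ => hs.elim y x⟩

/-- Sigma pairs to cocones. -/
def toC (p : Σ e : E, T.cocones.obj e) : Cocone T := ⟨p.1, p.2⟩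

lemma zag_of_rel {p q : Σ e : E, T.cocones.obj e}
    (h : Functor.ColimitTypeRel T.cocones p q) : Zag (toC T p) (toC T q) := by
  obtain ⟨e, y⟩ := p
  obtain ⟨e', y'⟩ := q
  obtain ⟨f, hf⟩ := h
  dsimp at f hf
  subst hf
  exact Or.inl ⟨{ hom := f, w := fun d => rfl }⟩

lemma zigzag_of_eqvGen {p q : Σ e : E, T.cocones.obj e}
    (h : Relation.EqvGen (Functor.ColimitTypeRel T.cocones) p q) :
    Zigzag (toC T p) (toC T q) := by
  induction h with
  | rel _ _ h => exact Relation.ReflTransGen.single (zag_of_rel T h)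
  | refl => exact Relation.ReflTransGen.refl
  | symm _ _ _ ih => exact Zigzag.symm ih
  | trans _ _ _ _ _ ih₁ ih₂ => exact ih₁.trans ih₂

/-- The canonical map from cocones to the colimit of the cocone functor. -/
noncomputable def g (κ : Cocone T) : colimit T.cocones :=
  colimit.ι T.cocones κ.pt κ.ι

lemma g_eq_of_hom {κ κ' : Cocone T} (f : κ ⟶ κ') : g T κ = g T κ' := by
  refine Types.colimit_sound f.hom ?_
  apply NatTrans.ext
  funext d
  exact f.w d

lemma g_eq_of_zag {κ κ' : Cocone T} (h : Zag κ κ') : g T κ = g T κ' := by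
  rcases h with ⟨⟨f⟩⟩ | ⟨⟨f⟩⟩
  · exact g_eq_of_hom T f
  · exact (g_eq_of_hom T f).symm

lemma g_eq_of_zigzag {κ κ' : Cocone T} (h : Zigzag κ κ') : g T κ = g T κ' := by
  induction h with
  | refl => rfl
  | tail _ h ih => exact ih.trans (g_eq_of_zag T h)

lemma connected_iff :
    (Nonempty (colimit T.cocones) ∧ Subsingleton (colimit T.cocones)) ↔
      IsConnected (Cocone T) := by
  constructor
  · rintro ⟨⟨x⟩, hs⟩
    obtain ⟨e, y, rfl⟩ := Types.jointly_surjective' x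
    have : Nonempty (Cocone T) := ⟨⟨e, y⟩⟩
    refine zigzag_isConnected (fun κ κ' => ?_)
    have : g T κ = g T κ' := hs.elim _ _
    have h := Types.colimit_eq this
    exact zigzag_of_eqvGen T h
  · intro h
    have hne : Nonempty (Cocone T) := IsConnected.is_nonempty
    obtain ⟨κ⟩ := hne
    refine ⟨⟨g T κ⟩, ⟨fun x y => ?_⟩⟩
    obtain ⟨e, a, rfl⟩ := Types.jointly_surjective' x
    obtain ⟨e', a', rfl⟩ := Types.jointly_surjective' y
    exact g_eq_of_zigzag T (isPreconnected_zigzag (Cocone.mk e a) (Cocone.mk e' a'))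

end Aux

/-- For a functor `T : D ⥤ E` between small categories, the
colimit functor `colim : (E ⥤ Set) ⥤ Set` preserves the limit of the
`Dᵒᵖ`-shaped diagram of representables `d ↦ E(T d, −)` iff the category of
cocones on `T` is nonempty and connected. -/
theorem preservesLimit_representables_iff_cocones_connected
    (D E : Type) [SmallCategory D] [SmallCategory E] (T : D ⥤ E) :
    PreservesLimit (T.op ⋙ coyoneda) (colim : (E ⥤ Type) ⥤ Type) ↔
      IsConnected (Cocone T) := by
  rw [← connected_iff T, ← nonempty_isLimit_mapCone_iff T]
  constructor
  · intro h
    exact ⟨isLimitOfPreserves colim (coconesConeIsLimit T)⟩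
  · rintro ⟨hl⟩
    exact preservesLimit_of_preserves_limit_cone (coconesConeIsLimit T) hl

end Paper
end
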